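/- Suppose ζ = q_0 q_1 ⋯ q_{m−1} is a primitive d-th root of unity. Set N = dm if m is even, or char K = 2, or (m is odd, char K ≠ 2 and d is even); and N = 2dm if m is odd, char K ≠ 2 and d is odd. Then E(Λ_q) is generated as a module over its subalgebra Z_gr(E(Λ_q)) by the finite set of monomials {γ_i^s δ_j^t : 0 ≤ i, j ≤ m−1, 0 ≤ s, t ≤ N} (where a product γ_i^s δ_j^t with mismatched endpoints is zero). -/

import Mathlib

open scoped BigOperators

noncomputable section

/-- Generators of the path algebra: trivial paths `e i`, arrows `a i : i → i+1`
and `abar i : i+1 → i`. -/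
inductive Gen (m : ℕ) : Type
  | e : ZMod m → Gen m
  | a : ZMod m → Gen m
  | abar : ZMod m → Gen m

/-- The free associative algebra on the generators. -/
abbrev FA (K : Type) [Field K] (m : ℕ) : Type := FreeAlgebra K (Gen m)

def Ee (K : Type) [Field K] (m : ℕ) (i : ZMod m) : FA K m := FreeAlgebra.ι K (Gen.e i)
def Aa (K : Type) [Field K] (m : ℕ) (i : ZMod m) : FA K m := FreeAlgebra.ι K (Gen.a i)
def Bb (K : Type) [Field K] (m : ℕ) (i : ZMod m) : FA K m := FreeAlgebra.ι K (Gen.abar i)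

/-- The defining relations of the path algebra KQ. -/
inductive PathRel (K : Type) [Field K] (m : ℕ) [NeZero m] : FA K m → FA K m → Prop
  | orth : ∀ i j : ZMod m, i ≠ j → PathRel K m (Ee K m i * Ee K m j) 0
  | idem : ∀ i : ZMod m, PathRel K m (Ee K m i * Ee K m i) (Ee K m i)
  | total : PathRel K m (∑ i : ZMod m, Ee K m i) 1
  | asrc : ∀ i : ZMod m, PathRel K m (Ee K m i * Aa K m i) (Aa K m i)
  | atgt : ∀ i : ZMod m, PathRel K m (Aa K m i * Ee K m (i + 1)) (Aa K m i)
  | bsrc : ∀ i : ZMod m, PathRel K m (Ee K m (i + 1) * Bb K m i) (Bb K m i)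
  | btgt : ∀ i : ZMod m, PathRel K m (Bb K m i * Ee K m i) (Bb K m i)

/-- The path algebra KQ. -/
abbrev PathAlg (K : Type) [Field K] (m : ℕ) [NeZero m] : Type := RingQuot (PathRel K m)

def pe (K : Type) [Field K] (m : ℕ) [NeZero m] (i : ZMod m) : PathAlg K m :=
  RingQuot.mkAlgHom K (PathRel K m) (Ee K m i)
def pa (K : Type) [Field K] (m : ℕ) [NeZero m] (i : ZMod m) : PathAlg K m :=
  RingQuot.mkAlgHom K (PathRel K m) (Aa K m i)
def pb (K : Type) [Field K] (m : ℕ) [NeZero m] (i : ZMod m) : PathAlg K m :=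
  RingQuot.mkAlgHom K (PathRel K m) (Bb K m i)

/-- The relations defining the Koszul dual (Ext algebra) of `Λ_q`:
`q_i⁻¹ a_i ā_i + ā_{i-1} a_{i-1} = 0`. -/
inductive ExtRel (K : Type) [Field K] (m : ℕ) [NeZero m] (q : ZMod m → K) :
    PathAlg K m → PathAlg K m → Prop
  | rel : ∀ i : ZMod m,
      ExtRel K m q ((q i)⁻¹ • (pa K m i * pb K m i) + pb K m (i - 1) * pa K m (i - 1)) 0

/-- The Ext algebra `E(Λ_q)`. -/
abbrev ExtAlg (K : Type) [Field K] (m : ℕ) [NeZero m] (q : ZMod m → K) : Type :=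
  RingQuot (ExtRel K m q)

def xe (K : Type) [Field K] (m : ℕ) [NeZero m] (q : ZMod m → K) (i : ZMod m) :
    ExtAlg K m q := RingQuot.mkAlgHom K (ExtRel K m q) (pe K m i)
def xa (K : Type) [Field K] (m : ℕ) [NeZero m] (q : ZMod m → K) (i : ZMod m) :
    ExtAlg K m q := RingQuot.mkAlgHom K (ExtRel K m q) (pa K m i)
def xb (K : Type) [Field K] (m : ℕ) [NeZero m] (q : ZMod m → K) (i : ZMod m) :
    ExtAlg K m q := RingQuot.mkAlgHom K (ExtRel K m q) (pb K m i)

/-- `γ_i^n`, the image of the path `a_i a_{i+1} ⋯ a_{i+n-1}` in `E(Λ_q)`. -/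
def gam (K : Type) [Field K] (m : ℕ) [NeZero m] (q : ZMod m → K) (i : ZMod m) :
    ℕ → ExtAlg K m q
  | 0 => xe K m q i
  | n + 1 => xa K m q i * gam K m q (i + 1) n

/-- `δ_i^n`, the image of the path `ā_{i+n-1} ⋯ ā_{i+1} ā_i` in `E(Λ_q)`. -/
def del (K : Type) [Field K] (m : ℕ) [NeZero m] (q : ZMod m → K) (i : ZMod m) :
    ℕ → ExtAlg K m q
  | 0 => xe K m q i
  | n + 1 => xb K m q (i + (n : ZMod m)) * del K m q i n

/-- Homogeneity of path-length degree `n` in `E(Λ_q)`: membership in the span of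
the (images of) paths of length `n`, i.e. of the monomials `γ_i^s δ_j^t` with `s + t = n`. -/
def Homog (K : Type) [Field K] (m : ℕ) [NeZero m] (q : ZMod m → K) (n : ℕ)
    (z : ExtAlg K m q) : Prop :=
  z ∈ Submodule.span K
    {x : ExtAlg K m q | ∃ (i j : ZMod m) (s t : ℕ), s + t = n ∧ x = gam K m q i s * del K m q j t}

/-- The graded centre of `E(Λ_q)`: the subalgebra generated by all homogeneous elements `z`
of degree `n` such that `z g = (-1)^{n n'} g z` for all homogeneous `g` of degree `n'`. -/
def ZGr (K : Type) [Field K] (m : ℕ) [NeZero m] (q : ZMod m → K) :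
    Subalgebra K (ExtAlg K m q) :=
  Algebra.adjoin K
    {z : ExtAlg K m q | ∃ n : ℕ, Homog K m q n z ∧
      ∀ (n' : ℕ) (g : ExtAlg K m q), Homog K m q n' g →
        z * g = ((-1 : K) ^ (n * n')) • (g * z)}

/-- The product `q_k q_{k+1} ⋯ q_{k+len-1}` (subscripts modulo `m`). -/
def qblock (K : Type) [Field K] (m : ℕ) [NeZero m] (q : ZMod m → K) (k len : ℕ) : K :=
  ∏ j ∈ Finset.range len, q ((k + j : ℕ) : ZMod m)

/-- The coefficient `∏_{k=1}^{i} (q_k ⋯ q_{k+len-1})⁻¹`. -/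
def wcoef (K : Type) [Field K] (m : ℕ) [NeZero m] (q : ZMod m → K) (i len : ℕ) : K :=
  ∏ k ∈ Finset.Icc 1 i, (qblock K m q k len)⁻¹

section Lemmas
variable (K : Type) [Field K] (m : ℕ) [NeZero m] (q : ZMod m → K)

/-- The quotient map from the path algebra to the Ext algebra. -/
def toExt : PathAlg K m →ₐ[K] ExtAlg K m q := RingQuot.mkAlgHom K (ExtRel K m q)

lemma xe_def (i : ZMod m) : xe K m q i = toExt K m q (pe K m i) := rfl
lemma xa_def (i : ZMod m) : xa K m q i = toExt K m q (pa K m i) := rfl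
lemma xb_def (i : ZMod m) : xb K m q i = toExt K m q (pb K m i) := rfl

lemma xee_ne {i j : ZMod m} (h : i ≠ j) : xe K m q i * xe K m q j = 0 := by
  rw [xe_def, xe_def, ← map_mul]
  have : RingQuot.mkAlgHom K (PathRel K m) (Ee K m i * Ee K m j)
      = RingQuot.mkAlgHom K (PathRel K m) 0 :=
    RingQuot.mkAlgHom_rel K (PathRel.orth i j h)
  rw [pe, pe, ← map_mul, this, map_zero, map_zero]

lemma xee (i : ZMod m) : xe K m q i * xe K m q i = xe K m q i := by
  rw [xe_def, ← map_mul]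
  have : RingQuot.mkAlgHom K (PathRel K m) (Ee K m i * Ee K m i)
      = RingQuot.mkAlgHom K (PathRel K m) (Ee K m i) :=
    RingQuot.mkAlgHom_rel K (PathRel.idem i)
  rw [pe, ← map_mul, this]

lemma xtotal : ∑ i : ZMod m, xe K m q i = 1 := by
  have : RingQuot.mkAlgHom K (PathRel K m) (∑ i : ZMod m, Ee K m i)
      = RingQuot.mkAlgHom K (PathRel K m) 1 :=
    RingQuot.mkAlgHom_rel K (PathRel.total)
  simp only [map_sum, map_one] at this
  calc ∑ i : ZMod m, xe K m q i
      = toExt K m q (∑ i : ZMod m, pe K m i) := by simp [xe_def, map_sum]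
    _ = 1 := by simp only [pe]; rw [this, map_one]

lemma xea (i : ZMod m) : xe K m q i * xa K m q i = xa K m q i := by
  rw [xe_def, xa_def, ← map_mul]
  have : RingQuot.mkAlgHom K (PathRel K m) (Ee K m i * Aa K m i)
      = RingQuot.mkAlgHom K (PathRel K m) (Aa K m i) :=
    RingQuot.mkAlgHom_rel K (PathRel.asrc i)
  rw [pe, pa, ← map_mul, this]

lemma xae (i : ZMod m) : xa K m q i * xe K m q (i + 1) = xa K m q i := by
  rw [xe_def, xa_def, ← map_mul]
  have : RingQuot.mkAlgHom K (PathRel K m) (Aa K m i * Ee K m (i + 1))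
      = RingQuot.mkAlgHom K (PathRel K m) (Aa K m i) :=
    RingQuot.mkAlgHom_rel K (PathRel.atgt i)
  rw [pe, pa, ← map_mul, this]

lemma xeb (i : ZMod m) : xe K m q (i + 1) * xb K m q i = xb K m q i := by
  rw [xe_def, xb_def, ← map_mul]
  have : RingQuot.mkAlgHom K (PathRel K m) (Ee K m (i + 1) * Bb K m i)
      = RingQuot.mkAlgHom K (PathRel K m) (Bb K m i) :=
    RingQuot.mkAlgHom_rel K (PathRel.bsrc i)
  rw [pe, pb, ← map_mul, this]

lemma xbe (i : ZMod m) : xb K m q i * xe K m q i = xb K m q i := by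
  rw [xe_def, xb_def, ← map_mul]
  have : RingQuot.mkAlgHom K (PathRel K m) (Bb K m i * Ee K m i)
      = RingQuot.mkAlgHom K (PathRel K m) (Bb K m i) :=
    RingQuot.mkAlgHom_rel K (PathRel.btgt i)
  rw [pe, pb, ← map_mul, this]

lemma ext_rel (i : ZMod m) :
    (q i)⁻¹ • (xa K m q i * xb K m q i) + xb K m q (i - 1) * xa K m q (i - 1) = 0 := by
  have h : RingQuot.mkAlgHom K (ExtRel K m q)
        ((q i)⁻¹ • (pa K m i * pb K m i) + pb K m (i - 1) * pa K m (i - 1))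
      = RingQuot.mkAlgHom K (ExtRel K m q) 0 :=
    RingQuot.mkAlgHom_rel K (ExtRel.rel i)
  simpa only [map_add, map_smul, map_mul, map_zero, xe_def, xa_def, xb_def, toExt] using h

lemma swap_ab (hq : ∀ i, q i ≠ 0) (i : ZMod m) :
    xa K m q i * xb K m q i = (-(q i)) • (xb K m q (i - 1) * xa K m q (i - 1)) := by
  have h := ext_rel K m q i
  have h2 : (q i)⁻¹ • (xa K m q i * xb K m q i)
      = -(xb K m q (i - 1) * xa K m q (i - 1)) := by
        have h' := eq_neg_of_add_eq_zero_left (G := ExtAlg K m q) h; exact h'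
  calc xa K m q i * xb K m q i
      = (q i) • ((q i)⁻¹ • (xa K m q i * xb K m q i)) := by
        rw [smul_smul, mul_inv_cancel₀ (hq i), one_smul]
    _ = (-(q i)) • (xb K m q (i - 1) * xa K m q (i - 1)) := by rw [h2]; module

lemma swap_ba (hq : ∀ i, q i ≠ 0) (i : ZMod m) :
    xb K m q i * xa K m q i = (-(q (i+1))⁻¹) • (xa K m q (i+1) * xb K m q (i+1)) := by
  have h := ext_rel K m q (i + 1)
  rw [add_sub_cancel_right] at h
  have h3 : xb K m q i * xa K m q i
      = -((q (i+1))⁻¹ • (xa K m q (i+1) * xb K m q (i+1))) := by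
        have h' := eq_neg_of_add_eq_zero_right (α := ExtAlg K m q) h; exact h'
  rw [h3]; module

end Lemmas
section Lemmas2
variable (K : Type) [Field K] (m : ℕ) [NeZero m] (q : ZMod m → K)

lemma gam_e_left (i : ZMod m) (n : ℕ) : xe K m q i * gam K m q i n = gam K m q i n := by
  cases n with
  | zero => exact xee K m q i
  | succ n => rw [gam, ← mul_assoc, xea]

lemma gam_e_left_ne {i j : ZMod m} (h : j ≠ i) (n : ℕ) : xe K m q j * gam K m q i n = 0 := by
  calc xe K m q j * gam K m q i n
      = xe K m q j * (xe K m q i * gam K m q i n) := by rw [gam_e_left]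
    _ = (xe K m q j * xe K m q i) * gam K m q i n := by rw [mul_assoc]
    _ = 0 := by rw [xee_ne K m q h, zero_mul]

lemma gam_e_right (i : ZMod m) (n : ℕ) :
    gam K m q i n * xe K m q (i + (n : ZMod m)) = gam K m q i n := by
  induction n generalizing i with
  | zero => simpa [gam] using xee K m q i
  | succ n ih =>
      have hc : (i + ((n+1 : ℕ) : ZMod m)) = (i + 1) + (n : ZMod m) := by push_cast; ring
      rw [gam, hc, mul_assoc, ih]

lemma gam_e_right_ne (i : ZMod m) (n : ℕ) {j : ZMod m} (h : i + (n : ZMod m) ≠ j) :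
    gam K m q i n * xe K m q j = 0 := by
  calc gam K m q i n * xe K m q j
      = gam K m q i n * (xe K m q (i + (n : ZMod m)) * xe K m q j) := by
        rw [← mul_assoc, gam_e_right]
    _ = 0 := by rw [xee_ne K m q h, mul_zero]

lemma del_e_left (i : ZMod m) (n : ℕ) :
    xe K m q (i + (n : ZMod m)) * del K m q i n = del K m q i n := by
  cases n with
  | zero => simpa [del] using xee K m q i
  | succ n =>
      have hc : (i + ((n+1 : ℕ) : ZMod m)) = (i + (n : ZMod m)) + 1 := by push_cast; ring
      rw [del, hc, ← mul_assoc, xeb]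

lemma del_e_left_ne {j : ZMod m} (i : ZMod m) (n : ℕ) (h : j ≠ i + (n : ZMod m)) :
    xe K m q j * del K m q i n = 0 := by
  calc xe K m q j * del K m q i n
      = (xe K m q j * xe K m q (i + (n : ZMod m))) * del K m q i n := by
        rw [mul_assoc, del_e_left]
    _ = 0 := by rw [xee_ne K m q h, zero_mul]

lemma del_e_right (i : ZMod m) (n : ℕ) : del K m q i n * xe K m q i = del K m q i n := by
  induction n with
  | zero => exact xee K m q i
  | succ n ih => rw [del, mul_assoc, ih]

lemma del_e_right_ne (i : ZMod m) (n : ℕ) {j : ZMod m} (h : i ≠ j) :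
    del K m q i n * xe K m q j = 0 := by
  calc del K m q i n * xe K m q j
      = del K m q i n * (xe K m q i * xe K m q j) := by rw [← mul_assoc, del_e_right]
    _ = 0 := by rw [xee_ne K m q h, mul_zero]

lemma gam_split (i : ZMod m) (n1 n2 : ℕ) :
    gam K m q i (n1 + n2) = gam K m q i n1 * gam K m q (i + (n1 : ZMod m)) n2 := by
  induction n1 generalizing i with
  | zero => simp [gam, gam_e_left]
  | succ n1 ih =>
      have h1 : n1 + 1 + n2 = (n1 + n2) + 1 := by ring
      have hc : (i + 1) + (n1 : ZMod m) = i + ((n1+1 : ℕ) : ZMod m) := by push_cast; ring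
      rw [h1, gam, gam, ih, ← mul_assoc, hc]

lemma del_split (i : ZMod m) (n1 n2 : ℕ) :
    del K m q i (n1 + n2) = del K m q (i + (n2 : ZMod m)) n1 * del K m q i n2 := by
  induction n1 with
  | zero => simpa [del] using (del_e_left K m q i n2).symm
  | succ n1 ih =>
      have h1 : n1 + 1 + n2 = (n1 + n2) + 1 := by ring
      have hc : (i + ((n1 + n2 : ℕ) : ZMod m)) = (i + (n2 : ZMod m)) + (n1 : ℕ) := by
        push_cast; ring
      rw [h1, del, ih, ← mul_assoc, hc]
      rfl

end Lemmas2
section Lemmas3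
variable (K : Type) [Field K] (m : ℕ) [NeZero m] (q : ZMod m → K)

/-- `q_j q_{j+1} ⋯ q_{j+n-1}` with `j : ZMod m`. -/
def Qb (j : ZMod m) (n : ℕ) : K := ∏ k ∈ Finset.range n, q (j + (k : ZMod m))

lemma Qb_zero (j : ZMod m) : Qb K m q j 0 = 1 := by simp [Qb]

lemma Qb_succ (j : ZMod m) (n : ℕ) :
    Qb K m q j (n + 1) = Qb K m q j n * q (j + (n : ZMod m)) := by
  rw [Qb, Finset.prod_range_succ]; rfl

lemma Qb_succ' (j : ZMod m) (n : ℕ) :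
    Qb K m q j (n + 1) = q j * Qb K m q (j + 1) n := by
  rw [Qb, Finset.prod_range_succ']
  simp only [Nat.cast_zero, add_zero, Nat.cast_add, Nat.cast_one]
  rw [mul_comm, Qb]
  congr 1
  refine Finset.prod_congr rfl fun k _ => ?_
  congr 1
  push_cast
  ring

lemma Qb_add (j : ZMod m) (n1 n2 : ℕ) :
    Qb K m q j (n1 + n2) = Qb K m q j n1 * Qb K m q (j + (n1 : ZMod m)) n2 := by
  rw [Qb, Finset.prod_range_add, Qb, Qb]
  congr 1
  refine Finset.prod_congr rfl fun k _ => ?_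
  congr 1
  push_cast
  ring

lemma Qb_m (j : ZMod m) : Qb K m q j m = ∏ i : ZMod m, q i := by
  have h1 : Qb K m q j m = ∏ i : ZMod m, q (j + i) := by
    rw [Qb]
    refine Finset.prod_nbij (fun k => (k : ZMod m)) (fun a _ => Finset.mem_univ _)
      ?_ ?_ (fun a _ => rfl)
    · intro a ha b hb hab
      simp only [Finset.coe_range, Set.mem_Iio] at ha hb
      have := congrArg ZMod.val hab
      rwa [ZMod.val_cast_of_lt ha, ZMod.val_cast_of_lt hb] at this
    · intro i _
      refine ⟨i.val, ?_, ?_⟩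
      · simpa [Finset.coe_range, Set.mem_Iio] using ZMod.val_lt i
      · simp [ZMod.natCast_val, ZMod.cast_id]
  rw [h1]
  exact Fintype.prod_equiv (Equiv.addLeft j) _ _ (fun i => rfl)

lemma Qb_mul_m (j : ZMod m) (c : ℕ) :
    Qb K m q j (c * m) = (∏ i : ZMod m, q i) ^ c := by
  induction c with
  | zero => simp [Qb_zero]
  | succ c ih =>
      have : (c + 1) * m = c * m + m := by ring
      rw [this, Qb_add, ih, Qb_m, pow_succ]

/-- Swap lemma for `γ_j^n ā_{j+n-1}`. -/
lemma gam_xb_swap (hq : ∀ i, q i ≠ 0) (n : ℕ) (j : ZMod m) :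
    gam K m q j n * xb K m q (j + (n : ZMod m) - 1)
      = ((-1 : K) ^ n * Qb K m q j n) • (xb K m q (j - 1) * gam K m q (j - 1) n) := by
  induction n generalizing j with
  | zero =>
      have h1 : (j - 1) + 1 = j := by ring
      simp only [Nat.cast_zero, add_zero, pow_zero, Qb_zero, mul_one, one_smul, gam]
      rw [xbe]
      have h2 := xeb K m q (j - 1)
      rwa [h1] at h2
  | succ n ih =>
      have hc : j + ((n + 1 : ℕ) : ZMod m) - 1 = (j + 1) + (n : ZMod m) - 1 := by
        push_cast; ring
      have hc2 : (j + 1) - 1 = j := by ring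
      have hc3 : (j - 1) + 1 = j := by ring
      rw [gam, hc, mul_assoc, ih, hc2, mul_smul_comm]
      rw [← mul_assoc, swap_ab K m q hq j, smul_mul_assoc, smul_smul]
      have : gam K m q (j - 1) (n + 1) = xa K m q (j - 1) * gam K m q j n := by
        rw [gam, hc3]
      rw [mul_assoc (xb K m q (j - 1)), ← this, Qb_succ']
      congr 1
      ring

/-- Swap lemma for `δ_j^n a_j`. -/
lemma del_xa_swap (hq : ∀ i, q i ≠ 0) (n : ℕ) (j : ZMod m) :
    del K m q j n * xa K m q j
      = ((-1 : K) ^ n * (Qb K m q (j + 1) n)⁻¹) • (xa K m q (j + (n : ZMod m)) * del K m q (j + 1) n) := by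
  induction n with
  | zero =>
      simp only [Nat.cast_zero, add_zero, pow_zero, Qb_zero, inv_one, mul_one, one_smul, del]
      rw [xea, xae]
  | succ n ih =>
      have hc : (j + 1) + (n : ZMod m) = j + (n : ZMod m) + 1 := by ring
      have hc4 : j + ((n + 1 : ℕ) : ZMod m) = (j + (n : ZMod m)) + 1 := by push_cast; ring
      rw [del, mul_assoc, ih, mul_smul_comm, ← mul_assoc,
        swap_ba K m q hq (j + (n : ZMod m)), smul_mul_assoc, smul_smul]
      have : del K m q (j + 1) (n + 1)
          = xb K m q (j + (n : ZMod m) + 1) * del K m q (j + 1) n := by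
        rw [del, hc]
      rw [mul_assoc (xa K m q (j + (n : ZMod m) + 1)), ← this, hc4]
      congr 1
      rw [Qb_succ, hc, mul_inv]
      ring
end Lemmas3
section Central
variable (K : Type) [Field K] (m : ℕ) [NeZero m] (q : ZMod m → K)

/-- The candidate central element `∑ i γ_i^N`. -/
def zg (N : ℕ) : ExtAlg K m q := ∑ i : ZMod m, gam K m q i N
/-- The candidate central element `∑ i δ_i^N`. -/
def zd (N : ℕ) : ExtAlg K m q := ∑ i : ZMod m, del K m q i N

variable {N : ℕ}

lemma gam_e_right0 (hNm : ((N : ℕ) : ZMod m) = 0) (i : ZMod m) :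
    gam K m q i N * xe K m q i = gam K m q i N := by
  have := gam_e_right K m q i N
  rwa [hNm, add_zero] at this

lemma gam_e_right0_ne (hNm : ((N : ℕ) : ZMod m) = 0) {i j : ZMod m} (h : i ≠ j) :
    gam K m q i N * xe K m q j = 0 := by
  refine gam_e_right_ne K m q i N ?_
  rwa [hNm, add_zero]

lemma zg_mul_xe (hNm : ((N : ℕ) : ZMod m) = 0) (j : ZMod m) :
    zg K m q N * xe K m q j = gam K m q j N := by
  rw [zg, Finset.sum_mul]
  rw [Finset.sum_eq_single j]
  · exact gam_e_right0 K m q hNm j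
  · intro i _ hij
    exact gam_e_right0_ne K m q hNm hij
  · intro h
    exact absurd (Finset.mem_univ j) h

lemma xe_mul_zg (j : ZMod m) : xe K m q j * zg K m q N = gam K m q j N := by
  rw [zg, Finset.mul_sum]
  rw [Finset.sum_eq_single j]
  · exact gam_e_left K m q j N
  · intro i _ hij
    exact gam_e_left_ne K m q hij.symm N
  · intro h
    exact absurd (Finset.mem_univ j) h

lemma zd_mul_xe (j : ZMod m) : zd K m q N * xe K m q j = del K m q j N := by
  rw [zd, Finset.sum_mul]
  rw [Finset.sum_eq_single j]
  · exact del_e_right K m q j N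
  · intro i _ hij
    exact del_e_right_ne K m q i N hij
  · intro h
    exact absurd (Finset.mem_univ j) h

lemma xe_mul_zd (hNm : ((N : ℕ) : ZMod m) = 0) (j : ZMod m) :
    xe K m q j * zd K m q N = del K m q j N := by
  rw [zd, Finset.mul_sum]
  rw [Finset.sum_eq_single j]
  · have := del_e_left K m q j N
    rwa [hNm, add_zero] at this
  · intro i _ hij
    refine del_e_left_ne K m q i N ?_
    rw [hNm, add_zero]
    exact hij.symm
  · intro h
    exact absurd (Finset.mem_univ j) h

lemma gam_succ_right (j : ZMod m) (n : ℕ) (hNm : ((n : ℕ) : ZMod m) = 0) :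
    gam K m q j n * xa K m q j = gam K m q j (n + 1) := by
  rw [gam_split K m q j n 1, hNm, add_zero]
  have h1 : gam K m q j 1 = xa K m q j := by
    show xa K m q j * gam K m q (j + 1) 0 = xa K m q j
    show xa K m q j * xe K m q (j + 1) = xa K m q j
    exact xae K m q j
  rw [h1]

lemma zg_comm_xe (hNm : ((N : ℕ) : ZMod m) = 0) (j : ZMod m) :
    zg K m q N * xe K m q j = xe K m q j * zg K m q N := by
  rw [zg_mul_xe K m q hNm, xe_mul_zg]

lemma zg_comm_xa (hNm : ((N : ℕ) : ZMod m) = 0) (j : ZMod m) :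
    zg K m q N * xa K m q j = xa K m q j * zg K m q N := by
  have hL : zg K m q N * xa K m q j = gam K m q j (N + 1) := by
    calc zg K m q N * xa K m q j
        = zg K m q N * (xe K m q j * xa K m q j) := by rw [xea]
      _ = (zg K m q N * xe K m q j) * xa K m q j := by rw [mul_assoc]
      _ = gam K m q j N * xa K m q j := by rw [zg_mul_xe K m q hNm]
      _ = gam K m q j (N + 1) := gam_succ_right K m q j N hNm
  have hR : xa K m q j * zg K m q N = gam K m q j (N + 1) := by
    calc xa K m q j * zg K m q N
        = (xa K m q j * xe K m q (j + 1)) * zg K m q N := by rw [xae]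
      _ = xa K m q j * (xe K m q (j + 1) * zg K m q N) := by rw [mul_assoc]
      _ = xa K m q j * gam K m q (j + 1) N := by rw [xe_mul_zg]
      _ = gam K m q j (N + 1) := rfl
  rw [hL, hR]

lemma zg_comm_xb (hq : ∀ i, q i ≠ 0) (hNm : ((N : ℕ) : ZMod m) = 0)
    (hQ : ∀ j, Qb K m q j N = 1) (hs : ((-1 : K)) ^ N = 1) (j : ZMod m) :
    zg K m q N * xb K m q j = xb K m q j * zg K m q N := by
  have hL : zg K m q N * xb K m q j = gam K m q (j + 1) N * xb K m q j := by
    calc zg K m q N * xb K m q j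
        = zg K m q N * (xe K m q (j + 1) * xb K m q j) := by rw [xeb]
      _ = (zg K m q N * xe K m q (j + 1)) * xb K m q j := by rw [mul_assoc]
      _ = gam K m q (j + 1) N * xb K m q j := by rw [zg_mul_xe K m q hNm]
  have hswap := gam_xb_swap K m q hq N (j + 1)
  rw [hNm] at hswap
  have e1 : j + 1 + 0 - 1 = j := by ring
  have e2 : j + 1 - 1 = j := by ring
  rw [e1, e2, hs, hQ, one_mul, one_smul] at hswap
  have hR : xb K m q j * zg K m q N = xb K m q j * gam K m q j N := by
    calc xb K m q j * zg K m q N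
        = (xb K m q j * xe K m q j) * zg K m q N := by rw [xbe]
      _ = xb K m q j * (xe K m q j * zg K m q N) := by rw [mul_assoc]
      _ = xb K m q j * gam K m q j N := by rw [xe_mul_zg]
  rw [hL, hswap, hR]

lemma del_succ_left (j : ZMod m) (n : ℕ) (hNm : ((n : ℕ) : ZMod m) = 0) :
    xb K m q j * del K m q j n = del K m q j (n + 1) := by
  rw [del, hNm, add_zero]

lemma zd_comm_xe (hNm : ((N : ℕ) : ZMod m) = 0) (j : ZMod m) :
    zd K m q N * xe K m q j = xe K m q j * zd K m q N := by
  rw [zd_mul_xe, xe_mul_zd K m q hNm]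

lemma zd_comm_xb (hNm : ((N : ℕ) : ZMod m) = 0) (j : ZMod m) :
    zd K m q N * xb K m q j = xb K m q j * zd K m q N := by
  have hL : zd K m q N * xb K m q j = del K m q j (N + 1) := by
    calc zd K m q N * xb K m q j
        = zd K m q N * (xe K m q (j + 1) * xb K m q j) := by rw [xeb]
      _ = (zd K m q N * xe K m q (j + 1)) * xb K m q j := by rw [mul_assoc]
      _ = del K m q (j + 1) N * xb K m q j := by rw [zd_mul_xe]
      _ = del K m q j (N + 1) := by
          have := del_split K m q j N 1
          have h1 : del K m q j 1 = xb K m q j := by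
            show xb K m q (j + ((0 : ℕ) : ZMod m)) * del K m q j 0 = xb K m q j
            simp only [Nat.cast_zero, add_zero]
            show xb K m q j * xe K m q j = xb K m q j
            exact xbe K m q j
          rw [Nat.cast_one] at this
          rw [this, h1]
  have hR : xb K m q j * zd K m q N = del K m q j (N + 1) := by
    calc xb K m q j * zd K m q N
        = (xb K m q j * xe K m q j) * zd K m q N := by rw [xbe]
      _ = xb K m q j * (xe K m q j * zd K m q N) := by rw [mul_assoc]
      _ = xb K m q j * del K m q j N := by rw [xe_mul_zd K m q hNm]
      _ = del K m q j (N + 1) := del_succ_left K m q j N hNm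
  rw [hL, hR]

lemma zd_comm_xa (hq : ∀ i, q i ≠ 0) (hNm : ((N : ℕ) : ZMod m) = 0)
    (hQ : ∀ j, Qb K m q j N = 1) (hs : ((-1 : K)) ^ N = 1) (j : ZMod m) :
    zd K m q N * xa K m q j = xa K m q j * zd K m q N := by
  have hL : zd K m q N * xa K m q j = del K m q j N * xa K m q j := by
    calc zd K m q N * xa K m q j
        = zd K m q N * (xe K m q j * xa K m q j) := by rw [xea]
      _ = (zd K m q N * xe K m q j) * xa K m q j := by rw [mul_assoc]
      _ = del K m q j N * xa K m q j := by rw [zd_mul_xe]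
  have hswap := del_xa_swap K m q hq N j
  rw [hNm, add_zero, hs, hQ, inv_one, one_mul, one_smul] at hswap
  have hR : xa K m q j * zd K m q N = xa K m q j * del K m q (j + 1) N := by
    calc xa K m q j * zd K m q N
        = (xa K m q j * xe K m q (j + 1)) * zd K m q N := by rw [xae]
      _ = xa K m q j * (xe K m q (j + 1) * zd K m q N) := by rw [mul_assoc]
      _ = xa K m q j * del K m q (j + 1) N := by rw [xe_mul_zd K m q hNm]
  rw [hL, hswap, hR]

/-- The composite quotient map `FA → ExtAlg`. -/
def toExt2 : FA K m →ₐ[K] ExtAlg K m q :=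
  (RingQuot.mkAlgHom K (ExtRel K m q)).comp (RingQuot.mkAlgHom K (PathRel K m))

lemma toExt2_surjective : Function.Surjective (toExt2 K m q) := by
  intro x
  obtain ⟨y, hy⟩ := RingQuot.mkAlgHom_surjective K (ExtRel K m q) x
  obtain ⟨z, hz⟩ := RingQuot.mkAlgHom_surjective K (PathRel K m) y
  exact ⟨z, by simp [toExt2, hz, hy]⟩

lemma central_of_comm_gens {z : ExtAlg K m q}
    (he : ∀ j, z * xe K m q j = xe K m q j * z)
    (ha : ∀ j, z * xa K m q j = xa K m q j * z)
    (hb : ∀ j, z * xb K m q j = xb K m q j * z) :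
    ∀ x : ExtAlg K m q, z * x = x * z := by
  intro x
  obtain ⟨y, rfl⟩ := toExt2_surjective K m q x
  induction y using FreeAlgebra.induction with
  | grade0 r => rw [AlgHom.commutes]; exact (Algebra.commutes r z).symm
  | grade1 g =>
      cases g with
      | e i => exact he i
      | a i => exact ha i
      | abar i => exact hb i
  | mul y1 y2 ih1 ih2 =>
      rw [map_mul, ← mul_assoc, ih1, mul_assoc, ih2, mul_assoc]
  | add y1 y2 ih1 ih2 =>
      rw [map_add, mul_add, add_mul, ih1, ih2]

lemma zg_central (hq : ∀ i, q i ≠ 0) (hNm : ((N : ℕ) : ZMod m) = 0)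
    (hQ : ∀ j, Qb K m q j N = 1) (hs : ((-1 : K)) ^ N = 1) :
    ∀ x : ExtAlg K m q, zg K m q N * x = x * zg K m q N :=
  central_of_comm_gens K m q (zg_comm_xe K m q hNm) (zg_comm_xa K m q hNm)
    (zg_comm_xb K m q hq hNm hQ hs)

lemma zd_central (hq : ∀ i, q i ≠ 0) (hNm : ((N : ℕ) : ZMod m) = 0)
    (hQ : ∀ j, Qb K m q j N = 1) (hs : ((-1 : K)) ^ N = 1) :
    ∀ x : ExtAlg K m q, zd K m q N * x = x * zd K m q N :=
  central_of_comm_gens K m q (zd_comm_xe K m q hNm)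
    (zd_comm_xa K m q hq hNm hQ hs) (zd_comm_xb K m q hNm)

lemma mem_ZGr_of_central_homog {z : ExtAlg K m q} (n : ℕ)
    (hcen : ∀ x, z * x = x * z) (hs : ((-1 : K)) ^ n = 1) (hhom : Homog K m q n z) :
    z ∈ ZGr K m q := by
  refine Algebra.subset_adjoin ⟨n, hhom, fun n' g _ => ?_⟩
  rw [hcen, pow_mul, hs, one_pow, one_smul]

lemma zg_homog (hNm : ((N : ℕ) : ZMod m) = 0) : Homog K m q N (zg K m q N) := by
  refine Submodule.sum_mem _ fun i _ => Submodule.subset_span ?_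
  exact ⟨i, i, N, 0, by simp, by
    show gam K m q i N = gam K m q i N * xe K m q i
    rw [gam_e_right0 K m q hNm]⟩

lemma zd_homog (hNm : ((N : ℕ) : ZMod m) = 0) : Homog K m q N (zd K m q N) := by
  refine Submodule.sum_mem _ fun i _ => Submodule.subset_span ?_
  refine ⟨i, i, 0, N, by simp, ?_⟩
  show del K m q i N = xe K m q i * del K m q i N
  have := del_e_left K m q i N
  rw [hNm, add_zero] at this
  rw [this]

lemma zg_mem_ZGr (hq : ∀ i, q i ≠ 0) (hNm : ((N : ℕ) : ZMod m) = 0)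
    (hQ : ∀ j, Qb K m q j N = 1) (hs : ((-1 : K)) ^ N = 1) :
    zg K m q N ∈ ZGr K m q :=
  mem_ZGr_of_central_homog K m q N (zg_central K m q hq hNm hQ hs) hs
    (zg_homog K m q hNm)

lemma zd_mem_ZGr (hq : ∀ i, q i ≠ 0) (hNm : ((N : ℕ) : ZMod m) = 0)
    (hQ : ∀ j, Qb K m q j N = 1) (hs : ((-1 : K)) ^ N = 1) :
    zd K m q N ∈ ZGr K m q :=
  mem_ZGr_of_central_homog K m q N (zd_central K m q hq hNm hQ hs) hs
    (zd_homog K m q hNm)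

end Central
section Span
variable (K : Type) [Field K] (m : ℕ) [NeZero m] (q : ZMod m → K)

/-- The set of all monomials `γ_a^s δ_b^t`. -/
def AllMon : Set (ExtAlg K m q) :=
  {x | ∃ (a b : ZMod m) (s t : ℕ), x = gam K m q a s * del K m q b t}

lemma gam_one (i : ZMod m) : gam K m q i 1 = xa K m q i := by
  show xa K m q i * gam K m q (i + 1) 0 = xa K m q i
  exact xae K m q i

lemma del_one (i : ZMod m) : del K m q i 1 = xb K m q i := by
  show xb K m q (i + ((0 : ℕ) : ZMod m)) * del K m q i 0 = xb K m q i
  simp only [Nat.cast_zero, add_zero]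
  exact xbe K m q i

lemma gam_as_mon (a : ZMod m) (s : ℕ) :
    gam K m q a s = gam K m q a s * del K m q (a + (s : ZMod m)) 0 :=
  (gam_e_right K m q a s).symm

lemma del_as_mon (b : ZMod m) (t : ℕ) :
    del K m q b t = gam K m q (b + (t : ZMod m)) 0 * del K m q b t :=
  (del_e_left K m q b t).symm

lemma xe_mem_allMon (i : ZMod m) : xe K m q i ∈ AllMon K m q :=
  ⟨i, i, 0, 0, (xee K m q i).symm⟩

lemma xa_mem_allMon (i : ZMod m) : xa K m q i ∈ AllMon K m q :=
  ⟨i, i + 1, 1, 0, by rw [← gam_one]; simpa using gam_as_mon K m q i 1⟩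

lemma xb_mem_allMon (i : ZMod m) : xb K m q i ∈ AllMon K m q :=
  ⟨i + 1, i, 0, 1, by rw [← del_one]; simpa using del_as_mon K m q i 1⟩

lemma gam_mul_gam_ne (a : ZMod m) (s : ℕ) {e : ZMod m} (σ : ℕ) (h : a + (s : ZMod m) ≠ e) :
    gam K m q a s * gam K m q e σ = 0 := by
  rw [← gam_e_left K m q e σ, ← mul_assoc, gam_e_right_ne K m q a s h, zero_mul]

lemma del_mul_del_ne {f : ZMod m} (τ : ℕ) (b : ZMod m) (t : ℕ)
    (h : f ≠ b + (t : ZMod m)) :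
    del K m q f τ * del K m q b t = 0 := by
  rw [← del_e_left K m q b t, ← mul_assoc, del_e_right_ne K m q f τ h, zero_mul]

lemma gam_mul_mon (a : ZMod m) (s : ℕ) :
    ∀ μ ∈ AllMon K m q, gam K m q a s * μ ∈ Submodule.span K (AllMon K m q) := by
  rintro μ ⟨e, f, σ, τ, rfl⟩
  rw [← mul_assoc]
  by_cases h : a + (s : ZMod m) = e
  · subst h
    rw [← gam_split]
    exact Submodule.subset_span ⟨a, f, s + σ, τ, rfl⟩
  · rw [gam_mul_gam_ne K m q a s σ h, zero_mul]
    exact Submodule.zero_mem _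

lemma mon_mul_del (b : ZMod m) (t : ℕ) :
    ∀ μ ∈ AllMon K m q, μ * del K m q b t ∈ Submodule.span K (AllMon K m q) := by
  rintro μ ⟨e, f, σ, τ, rfl⟩
  rw [mul_assoc]
  by_cases h : f = b + (t : ZMod m)
  · subst h
    rw [← del_split]
    exact Submodule.subset_span ⟨e, b, σ, τ + t, rfl⟩
  · rw [del_mul_del_ne K m q τ b t h, mul_zero]
    exact Submodule.zero_mem _

lemma mul_mem_span_left {y : ExtAlg K m q}
    (hy : ∀ μ ∈ AllMon K m q, y * μ ∈ Submodule.span K (AllMon K m q))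
    {x : ExtAlg K m q} (hx : x ∈ Submodule.span K (AllMon K m q)) :
    y * x ∈ Submodule.span K (AllMon K m q) := by
  induction hx using Submodule.span_induction with
  | mem μ hμ => exact hy μ hμ
  | zero => rw [mul_zero]; exact Submodule.zero_mem _
  | add x1 x2 _ _ ih1 ih2 => rw [mul_add]; exact Submodule.add_mem _ ih1 ih2
  | smul c x1 _ ih => rw [mul_smul_comm]; exact Submodule.smul_mem _ c ih

lemma mul_mem_span_right {y : ExtAlg K m q}
    (hy : ∀ μ ∈ AllMon K m q, μ * y ∈ Submodule.span K (AllMon K m q))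
    {x : ExtAlg K m q} (hx : x ∈ Submodule.span K (AllMon K m q)) :
    x * y ∈ Submodule.span K (AllMon K m q) := by
  induction hx using Submodule.span_induction with
  | mem μ hμ => exact hy μ hμ
  | zero => rw [zero_mul]; exact Submodule.zero_mem _
  | add x1 x2 _ _ ih1 ih2 => rw [add_mul]; exact Submodule.add_mem _ ih1 ih2
  | smul c x1 _ ih => rw [smul_mul_assoc]; exact Submodule.smul_mem _ c ih

lemma del_mul_gam_mem (hq : ∀ i, q i ≠ 0) :
    ∀ (s t : ℕ) (b c : ZMod m),
      del K m q b t * gam K m q c s ∈ Submodule.span K (AllMon K m q) := by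
  intro s
  induction s with
  | zero =>
      intro t b c
      show del K m q b t * xe K m q c ∈ _
      by_cases h : b = c
      · subst h
        rw [del_e_right]
        exact Submodule.subset_span ⟨b + (t : ZMod m), b, 0, t, del_as_mon K m q b t⟩
      · rw [del_e_right_ne K m q b t h]
        exact Submodule.zero_mem _
  | succ s ih =>
      intro t b c
      by_cases h : b = c
      · subst h
        rw [gam, ← mul_assoc, del_xa_swap K m q hq t b, smul_mul_assoc, mul_assoc]
        exact Submodule.smul_mem _ _
          (mul_mem_span_left K m q
            (by rw [← gam_one K m q (b + (t : ZMod m))]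
                exact gam_mul_mon K m q (b + (t : ZMod m)) 1)
            (ih t (b + 1) (b + 1)))
      · have hz : del K m q b t * gam K m q c (s + 1) = 0 := by
          calc del K m q b t * gam K m q c (s + 1)
              = (del K m q b t * xe K m q c) * gam K m q c (s + 1) := by
                rw [mul_assoc, gam_e_left]
            _ = 0 := by rw [del_e_right_ne K m q b t h, zero_mul]
        rw [hz]
        exact Submodule.zero_mem _

lemma mon_mul_mon (hq : ∀ i, q i ≠ 0) :
    ∀ μ1 ∈ AllMon K m q, ∀ μ2 ∈ AllMon K m q,
      μ1 * μ2 ∈ Submodule.span K (AllMon K m q) := by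
  rintro μ1 ⟨a, b, s, t, rfl⟩ μ2 ⟨c, d, s', t', rfl⟩
  have h2 : (gam K m q a s * del K m q b t) * (gam K m q c s' * del K m q d t')
      = gam K m q a s * ((del K m q b t * gam K m q c s') * del K m q d t') := by
    rw [mul_assoc, mul_assoc]
  rw [h2]
  exact mul_mem_span_left K m q (gam_mul_mon K m q a s)
    (mul_mem_span_right K m q (mon_mul_del K m q d t') (del_mul_gam_mem K m q hq s' t b c))

lemma one_mem_span_allMon : (1 : ExtAlg K m q) ∈ Submodule.span K (AllMon K m q) := by
  rw [← xtotal K m q]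
  exact Submodule.sum_mem _ fun i _ => Submodule.subset_span (xe_mem_allMon K m q i)

lemma mem_span_allMon (hq : ∀ i, q i ≠ 0) (x : ExtAlg K m q) :
    x ∈ Submodule.span K (AllMon K m q) := by
  obtain ⟨y, rfl⟩ := toExt2_surjective K m q x
  induction y using FreeAlgebra.induction with
  | grade0 r =>
      rw [AlgHom.commutes, Algebra.algebraMap_eq_smul_one]
      exact Submodule.smul_mem _ r (one_mem_span_allMon K m q)
  | grade1 g =>
      cases g with
      | e i => exact Submodule.subset_span (xe_mem_allMon K m q i)
      | a i => exact Submodule.subset_span (xa_mem_allMon K m q i)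
      | abar i => exact Submodule.subset_span (xb_mem_allMon K m q i)
  | mul y1 y2 ih1 ih2 =>
      rw [map_mul]
      refine mul_mem_span_right K m q (fun μ1 hμ1 => ?_) ih1
      exact mul_mem_span_left K m q (fun μ2 hμ2 => mon_mul_mon K m q hq μ1 hμ1 μ2 hμ2) ih2
  | add y1 y2 ih1 ih2 =>
      rw [map_add]
      exact Submodule.add_mem _ ih1 ih2

end Span
/-- if `ζ` is a primitive `d`-th root of unity, then `E(Λ_q)` is generated
as a module over its graded centre by the finitely many monomials `γ_a^s δ_b^t` with
`s, t ≤ N`, where `N = dm` (resp. `N = 2dm` when `m` is odd, `char K ≠ 2` and `d` is odd). -/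
theorem ext_algebra_generated_by_bounded_monomials
    (K : Type) [Field K] (m : ℕ) [NeZero m] (hm : 1 ≤ m)
    (q : ZMod m → K) (hq : ∀ i, q i ≠ 0)
    (d : ℕ) (hd : 0 < d) (hζ : IsPrimitiveRoot (∏ i : ZMod m, q i) d) :
    let N : ℕ := if m % 2 = 1 ∧ ringChar K ≠ 2 ∧ d % 2 = 1 then 2 * d * m else d * m
    ∀ x : ExtAlg K m q, ∃ (n : ℕ) (cf g : Fin n → ExtAlg K m q),
      (∀ i, cf i ∈ ZGr K m q) ∧
      (∀ i, ∃ (a b : ZMod m) (s t : ℕ), s ≤ N ∧ t ≤ N ∧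
        g i = gam K m q a s * del K m q b t) ∧
      x = ∑ i, cf i * g i := by
  intro N x
  have hNdef : N = if m % 2 = 1 ∧ ringChar K ≠ 2 ∧ d % 2 = 1 then 2 * d * m else d * m := rfl
  have hNm : ((N : ℕ) : ZMod m) = 0 := by
    rw [ZMod.natCast_eq_zero_iff, hNdef]
    split_ifs
    · exact ⟨2 * d, by ring⟩
    · exact ⟨d, by ring⟩
  have hQ : ∀ j, Qb K m q j N = 1 := by
    intro j
    rw [hNdef]
    split_ifs
    · rw [Qb_mul_m, mul_comm 2 d, pow_mul, hζ.pow_eq_one, one_pow]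
    · rw [Qb_mul_m, hζ.pow_eq_one]
  have hs : ((-1 : K)) ^ N = 1 := by
    by_cases hcond : m % 2 = 1 ∧ ringChar K ≠ 2 ∧ d % 2 = 1
    · rw [hNdef, if_pos hcond]
      exact Even.neg_one_pow ⟨d * m, by ring⟩
    · rw [hNdef, if_neg hcond]
      rcases Nat.even_or_odd (d * m) with he | ho
      · exact he.neg_one_pow
      · obtain ⟨hod, hom⟩ := Nat.odd_mul.mp ho
        have hchar : ringChar K = 2 := by
          by_contra hch
          exact hcond ⟨Nat.odd_iff.mp hom, hch, Nat.odd_iff.mp hod⟩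
        haveI : CharP K 2 := ringChar.of_eq hchar
        rw [CharTwo.neg_eq, one_pow]
  have hNpos : 0 < N := by
    have hm0 : 0 < m := hm
    rw [hNdef]
    split_ifs
    · exact Nat.mul_pos (Nat.mul_pos (by norm_num) hd) hm0
    · exact Nat.mul_pos hd hm0
  have hzg := zg_mem_ZGr K m q hq hNm hQ hs
  have hzd := zd_mem_ZGr K m q hq hNm hQ hs
  set Mon : Set (ExtAlg K m q) :=
    {y | ∃ (a b : ZMod m) (s t : ℕ), s ≤ N ∧ t ≤ N ∧ y = gam K m q a s * del K m q b t}
    with hMon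
  have hsmul : ∀ (c : (ZGr K m q)) (y : ExtAlg K m q), c • y = (c : ExtAlg K m q) * y :=
    fun c y => rfl
  have key : ∀ (n s t : ℕ) (a b : ZMod m), s + t ≤ n →
      gam K m q a s * del K m q b t ∈ Submodule.span (↥(ZGr K m q)) Mon := by
    intro n
    induction n with
    | zero =>
        intro s t a b hst
        exact Submodule.subset_span ⟨a, b, s, t, by omega, by omega, rfl⟩
    | succ n ih =>
        intro s t a b hst
        by_cases hsN : s ≤ N
        · by_cases htN : t ≤ N
          · exact Submodule.subset_span ⟨a, b, s, t, hsN, htN, rfl⟩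
          · push_neg at htN
            have ht' : t = N + (t - N) := by omega
            have heq : gam K m q a s * del K m q b t
                = zd K m q N * (gam K m q a s * del K m q b (t - N)) := by
              conv_lhs => rw [ht']
              rw [del_split K m q b N (t - N),
                ← zd_mul_xe K m q (b + ((t - N : ℕ) : ZMod m)),
                mul_assoc (zd K m q N), del_e_left, ← mul_assoc,
                ← zd_central K m q hq hNm hQ hs (gam K m q a s), mul_assoc]
            rw [heq]
            exact Submodule.smul_mem _ (⟨zd K m q N, hzd⟩ : ZGr K m q)
              (ih s (t - N) a b (by omega))
        · push_neg at hsN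
          have hs' : s = N + (s - N) := by omega
          have heq : gam K m q a s * del K m q b t
              = zg K m q N * (gam K m q a (s - N) * del K m q b t) := by
            conv_lhs => rw [hs']
            rw [gam_split K m q a N (s - N), hNm, add_zero,
              ← zg_mul_xe K m q hNm a,
              mul_assoc (zg K m q N), gam_e_left, mul_assoc]
          rw [heq]
          exact Submodule.smul_mem _ (⟨zg K m q N, hzg⟩ : ZGr K m q)
            (ih (s - N) t a b (by omega))
  have hx : x ∈ Submodule.span (↥(ZGr K m q)) Mon := by
    have h1 := mem_span_allMon K m q hq x
    have h2 : Submodule.span K (AllMon K m q) ≤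
        (Submodule.span (↥(ZGr K m q)) Mon).restrictScalars K := by
      rw [Submodule.span_le]
      rintro μ ⟨a, b, s, t, rfl⟩
      exact key (s + t) s t a b le_rfl
    exact h2 h1
  obtain ⟨n, f, g, hsum⟩ := Submodule.mem_span_set'.mp hx
  refine ⟨n, fun i => (f i : ExtAlg K m q), fun i => (g i : ExtAlg K m q),
    fun i => (f i).2, fun i => ?_, ?_⟩
  · obtain ⟨a, b, s, t, hsN, htN, hgi⟩ := (g i).2
    exact ⟨a, b, s, t, hsN, htN, hgi⟩
  · rw [← hsum]
    exact (Finset.sum_congr rfl fun i _ => hsmul (f i) (g i)).symm
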